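/- Let p be a natural number with p < 5, and set k = (7−p)/2. For a > 0 let f(s) = a·s^k and g(s) = 1, and define L(s₀) and E(s₀) by L(s₀) = 2∫_{s₀}^{∞} (g(s)/f(s))·f(s₀)/√(f(s)² − f(s₀)²) ds and E(s₀) = f(s₀)·L(s₀) + 2∫_{s₀}^{∞} (g(s)/f(s))·( √(f(s)² − f(s₀)²) − f(s) ) ds − 2∫_{0}^{s₀} g(s) ds. Then there exists a constant C_p > 0, depending only on p, such that for every a > 0 and every s₀ > 0: E(s₀) = − C_p · a^{−2/(5−p)} · L(s₀)^{−2/(5−p)}. In particular, with a = (g²_{YM}·d_p·N)^{−1/2} this gives the quark–antiquark potential E ∝ − ( g²_{YM} N / L² )^{1/(5−p)} of the (p+1)-dimensional maximally supersymmetric Yang–Mills theory. -/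

import Mathlib

open MeasureTheory Real Set
open Filter Topology

noncomputable def qqPhi (k t : ℝ) : ℝ := 1 / (t ^ k * Real.sqrt ((t ^ k) ^ 2 - 1))
noncomputable def qqPsi (k t : ℝ) : ℝ := (1 / t ^ k) * (Real.sqrt ((t ^ k) ^ 2 - 1) - t ^ k)

section aux
variable {k : ℝ}

lemma qq_x_gt (hk : 0 < k) {t : ℝ} (ht : 1 < t) : 1 < t ^ k :=
  Real.one_lt_rpow_iff_of_pos (lt_trans zero_lt_one ht) |>.mpr (Or.inl ⟨ht, hk⟩)

lemma qq_q_pos (hk : 0 < k) {t : ℝ} (ht : 1 < t) : 0 < (t ^ k) ^ 2 - 1 := by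
  have := qq_x_gt hk ht; nlinarith

lemma qqPhi_pos (hk : 0 < k) {t : ℝ} (ht : 1 < t) : 0 < qqPhi k t := by
  have h1 := qq_x_gt hk ht
  have h2 := Real.sqrt_pos.mpr (qq_q_pos hk ht)
  unfold qqPhi; positivity

lemma qqPhi_contOn (hk : 0 < k) : ContinuousOn (qqPhi k) (Ioi 1) := by
  have hx : ContinuousOn (fun t : ℝ => t ^ k) (Ioi 1) :=
    continuousOn_id.rpow_const fun t ht => Or.inl
      (by simp only [id_eq]; exact ne_of_gt (lt_trans zero_lt_one ht))
  apply ContinuousOn.div continuousOn_const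
  · exact hx.mul (Real.continuous_sqrt.comp_continuousOn ((hx.pow 2).sub continuousOn_const))
  · intro t ht
    have h1 := qq_x_gt hk ht
    have h2 := Real.sqrt_pos.mpr (qq_q_pos hk ht)
    positivity

lemma qqPsi_contOn (hk : 0 < k) : ContinuousOn (qqPsi k) (Ici 1) := by
  have hx : ContinuousOn (fun t : ℝ => t ^ k) (Ici 1) :=
    continuousOn_id.rpow_const fun t ht => Or.inl
      (by simp only [id_eq]; exact ne_of_gt (lt_of_lt_of_le zero_lt_one ht))
  have hxne : ∀ t ∈ Ici (1:ℝ), t ^ k ≠ 0 := by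
    intro t ht
    have : (1:ℝ) ≤ t := ht
    positivity
  exact (ContinuousOn.div continuousOn_const hx hxne).mul
    ((Real.continuous_sqrt.comp_continuousOn ((hx.pow 2).sub continuousOn_const)).sub hx)

end aux

variable {k : ℝ}

lemma qq_sq {t : ℝ} (ht : 0 ≤ t) (k : ℝ) : (t ^ k) ^ 2 = t ^ (2 * k) := by
  rw [← Real.rpow_natCast (t ^ k) 2, ← Real.rpow_mul ht]
  ring_nf

lemma qq_t_le (hk : 1 ≤ 2 * k) {t : ℝ} (ht : 1 ≤ t) : t ≤ (t ^ k) ^ 2 := by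
  rw [qq_sq (le_trans zero_le_one ht) k]
  calc t = t ^ (1 : ℝ) := (Real.rpow_one t).symm
    _ ≤ t ^ (2 * k) := Real.rpow_le_rpow_of_exponent_le ht hk

lemma qqPhi_integrable (hk : 1 < k) : IntegrableOn (qqPhi k) (Ioi 1) := by
  have hk0 : 0 < k := lt_trans zero_lt_one hk
  rw [← Ioc_union_Ioi_eq_Ioi (le_of_lt one_lt_two)]
  apply IntegrableOn.union
  · -- on Ioc 1 2, compare with (t-1)^(-1/2)
    have hbase : IntegrableOn (fun t : ℝ => (t - 1) ^ (-(1/2) : ℝ)) (Ioc 1 2) := by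
      have h := (intervalIntegral.intervalIntegrable_rpow'
        (a := 0) (b := 1) (r := (-(1/2) : ℝ)) (by norm_num)).comp_sub_right 1
      norm_num at h
      exact (intervalIntegrable_iff_integrableOn_Ioc_of_le (by norm_num)).mp h
    apply hbase.mono' (((qqPhi_contOn hk0).mono Ioc_subset_Ioi_self).aestronglyMeasurable
      measurableSet_Ioc)
    rw [ae_restrict_iff' measurableSet_Ioc]
    refine ae_of_all _ fun t ht => ?_
    have ht1 : 1 < t := ht.1
    have ht0 : 0 < t := lt_trans zero_lt_one ht1
    have hx1 : 1 < t ^ k := qq_x_gt hk0 ht1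
    have hq : 0 < (t ^ k) ^ 2 - 1 := qq_q_pos hk0 ht1
    have h2k : t ≤ (t ^ k) ^ 2 := qq_t_le (k := k) (by linarith) ht1.le
    have hsp : 0 < Real.sqrt (t - 1) := Real.sqrt_pos.mpr (by linarith)
    have hs : Real.sqrt (t - 1) ≤ Real.sqrt ((t ^ k) ^ 2 - 1) :=
      Real.sqrt_le_sqrt (by linarith)
    have hrw : (t - 1) ^ (-(1/2) : ℝ) = 1 / Real.sqrt (t - 1) := by
      rw [Real.rpow_neg (by linarith), Real.sqrt_eq_rpow]
      norm_num
    rw [Real.norm_eq_abs, abs_of_pos (qqPhi_pos hk0 ht1), hrw]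
    unfold qqPhi
    apply one_div_le_one_div_of_le hsp
    calc Real.sqrt (t - 1) ≤ Real.sqrt ((t ^ k) ^ 2 - 1) := hs
      _ ≤ t ^ k * Real.sqrt ((t ^ k) ^ 2 - 1) :=
        le_mul_of_one_le_left (Real.sqrt_nonneg _) hx1.le
  · -- on Ioi 2, compare with √2 * t^(-(2k))
    have hbase : IntegrableOn (fun t : ℝ => Real.sqrt 2 * t ^ (-(2 * k))) (Ioi 2) :=
      (integrableOn_Ioi_rpow_of_lt (by linarith) (by norm_num)).const_mul _
    apply hbase.mono' (((qqPhi_contOn hk0).mono (Ioi_subset_Ioi one_le_two)).aestronglyMeasurable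
      measurableSet_Ioi)
    rw [ae_restrict_iff' measurableSet_Ioi]
    refine ae_of_all _ fun t ht => ?_
    have ht2 : 2 < t := ht
    have ht1 : 1 < t := by linarith
    have ht0 : 0 < t := by linarith
    have hx1 : 1 < t ^ k := qq_x_gt hk0 ht1
    have hq : 0 < (t ^ k) ^ 2 - 1 := qq_q_pos hk0 ht1
    have hx2 : 2 ≤ (t ^ k) ^ 2 := le_trans ht2.le (qq_t_le (k := k) (by linarith) ht1.le)
    have h2 : t ^ k / Real.sqrt 2 ≤ Real.sqrt ((t ^ k) ^ 2 - 1) := by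
      have := Real.sqrt_le_sqrt (show (t ^ k) ^ 2 / 2 ≤ (t ^ k) ^ 2 - 1 by linarith)
      rwa [Real.sqrt_div (by positivity) 2, Real.sqrt_sq (by positivity)] at this
    have hs2 : (0 : ℝ) < Real.sqrt 2 := by positivity
    have key : (t ^ k) ^ 2 / Real.sqrt 2 ≤ t ^ k * Real.sqrt ((t ^ k) ^ 2 - 1) := by
      have := mul_le_mul_of_nonneg_left h2 (by positivity : (0:ℝ) ≤ t ^ k)
      calc (t ^ k) ^ 2 / Real.sqrt 2 = t ^ k * (t ^ k / Real.sqrt 2) := by ring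
        _ ≤ t ^ k * Real.sqrt ((t ^ k) ^ 2 - 1) := this
    rw [Real.norm_eq_abs, abs_of_pos (qqPhi_pos hk0 ht1)]
    unfold qqPhi
    have hrw : t ^ (-(2 * k)) = ((t ^ k) ^ 2)⁻¹ := by
      rw [Real.rpow_neg ht0.le, qq_sq ht0.le]
    rw [hrw]
    calc 1 / (t ^ k * Real.sqrt ((t ^ k) ^ 2 - 1))
        ≤ 1 / ((t ^ k) ^ 2 / Real.sqrt 2) := one_div_le_one_div_of_le (by positivity) key
      _ = Real.sqrt 2 * ((t ^ k) ^ 2)⁻¹ := by field_simp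

lemma qqPsi_abs_le (hk : 1 < k) {t : ℝ} (ht : 1 < t) : ‖qqPsi k t‖ ≤ t ^ (-(2 * k)) := by
  have hk0 : 0 < k := lt_trans zero_lt_one hk
  have ht0 : 0 < t := lt_trans zero_lt_one ht
  have hx1 : 1 < t ^ k := qq_x_gt hk0 ht
  have hq : 0 < (t ^ k) ^ 2 - 1 := qq_q_pos hk0 ht
  set x := t ^ k with hxdef
  set w := Real.sqrt (x ^ 2 - 1) with hwdef
  have hw2 : w ^ 2 = x ^ 2 - 1 := Real.sq_sqrt (by linarith)
  have hw0 : 0 ≤ w := Real.sqrt_nonneg _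
  have hwx : w ≤ x := by nlinarith
  have hkey : (x - w) * (x + w) = 1 := by nlinarith
  have hxw : x - w ≤ 1 / x := by
    rw [le_div_iff₀ (by linarith)]
    nlinarith
  have hnp : qqPsi k t ≤ 0 := by
    unfold qqPsi
    rw [← hxdef, ← hwdef]
    have : (0:ℝ) < x := by linarith
    have := mul_nonneg (le_of_lt (by positivity : (0:ℝ) < 1 / x)) (sub_nonneg.mpr hwx)
    nlinarith
  have hrw : t ^ (-(2 * k)) = (x ^ 2)⁻¹ := by
    rw [Real.rpow_neg ht0.le, qq_sq ht0.le]
  rw [Real.norm_eq_abs, abs_of_nonpos hnp, hrw]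
  unfold qqPsi
  rw [← hxdef, ← hwdef]
  have h1 : -(1 / x * (w - x)) = (x - w) / x := by ring
  rw [h1, div_le_iff₀ (by linarith : (0:ℝ) < x)]
  have h2 : (x ^ 2)⁻¹ * x = 1 / x := by
    rw [pow_two, mul_inv]
    field_simp
  rw [h2]
  exact hxw

lemma qqPsi_integrable (hk : 1 < k) : IntegrableOn (qqPsi k) (Ioi 1) := by
  have hbase : IntegrableOn (fun t : ℝ => t ^ (-(2 * k))) (Ioi 1) :=
    integrableOn_Ioi_rpow_of_lt (by linarith) one_pos
  apply hbase.mono' (((qqPsi_contOn (lt_trans zero_lt_one hk)).mono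
    Ioi_subset_Ici_self).aestronglyMeasurable measurableSet_Ioi)
  rw [ae_restrict_iff' measurableSet_Ioi]
  exact ae_of_all _ fun t ht => qqPsi_abs_le hk ht

lemma qq_hasDeriv (hk : 1 < k) {t : ℝ} (ht : 1 < t) :
    HasDerivAt (fun t => t * qqPsi k t) (qqPsi k t + k * qqPhi k t) t := by
  have hk0 : 0 < k := lt_trans zero_lt_one hk
  have ht0 : 0 < t := lt_trans zero_lt_one ht
  have hx1 : 1 < t ^ k := qq_x_gt hk0 ht
  have hx0 : (0:ℝ) < t ^ k := by linarith
  have hq : 0 < (t ^ k) ^ 2 - 1 := qq_q_pos hk0 ht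
  have hw0 : 0 < Real.sqrt ((t ^ k) ^ 2 - 1) := Real.sqrt_pos.mpr hq
  have hu : HasDerivAt (fun t : ℝ => t ^ k) (k * t ^ (k - 1)) t :=
    Real.hasDerivAt_rpow_const (Or.inl (ne_of_gt ht0))
  have hv : HasDerivAt (fun t : ℝ => (t ^ k) ^ 2 - 1)
      ((2 : ℕ) * (t ^ k) ^ 1 * (k * t ^ (k - 1))) t := (hu.pow 2).sub_const 1
  have hsq : HasDerivAt (fun t : ℝ => Real.sqrt ((t ^ k) ^ 2 - 1))
      (1 / (2 * Real.sqrt ((t ^ k) ^ 2 - 1)) * ((2 : ℕ) * (t ^ k) ^ 1 * (k * t ^ (k - 1)))) t :=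
    (Real.hasDerivAt_sqrt (ne_of_gt hq)).comp t hv
  have hmain := ((hasDerivAt_id t).mul (hsq.sub hu)).div hu (ne_of_gt hx0)
  have hfun : (fun t => t * qqPsi k t) =
      fun t : ℝ => t * (Real.sqrt ((t ^ k) ^ 2 - 1) - t ^ k) / t ^ k := by
    funext s; unfold qqPsi; ring
  rw [hfun]
  refine hmain.congr_deriv (Eq.symm ?_)
  have htk1 : t ^ (k - 1) = t ^ k / t := by rw [Real.rpow_sub ht0, Real.rpow_one]
  have hw2 : (Real.sqrt ((t ^ k) ^ 2 - 1)) ^ 2 = (t ^ k) ^ 2 - 1 := Real.sq_sqrt hq.le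
  unfold qqPsi qqPhi
  rw [htk1]
  simp only [id_eq, Pi.mul_apply, Pi.sub_apply]
  field_simp
  linear_combination (2 * k) * hw2

lemma qq_tendsto (hk : 1 < k) : Tendsto (fun t => t * qqPsi k t) atTop (𝓝 0) := by
  apply squeeze_zero_norm' (a := fun t : ℝ => t ^ (-(2 * k - 1)))
  · filter_upwards [eventually_gt_atTop 1] with t ht
    have ht0 : (0:ℝ) < t := lt_trans zero_lt_one ht
    calc ‖t * qqPsi k t‖ = t * ‖qqPsi k t‖ := by
          rw [norm_mul, Real.norm_of_nonneg ht0.le]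
      _ ≤ t * t ^ (-(2 * k)) := mul_le_mul_of_nonneg_left (qqPsi_abs_le hk ht) ht0.le
      _ = t ^ (-(2 * k - 1)) := by
          rw [show -(2 * k - 1) = 1 + -(2 * k) by ring, Real.rpow_add ht0, Real.rpow_one]
  · exact tendsto_rpow_neg_atTop (by linarith)

lemma qqPsi_integral (hk : 1 < k) :
    ∫ t in Ioi 1, qqPsi k t = 1 - k * ∫ t in Ioi 1, qqPhi k t := by
  have hk0 : 0 < k := lt_trans zero_lt_one hk
  have hψ := qqPsi_integrable hk
  have hφ := qqPhi_integrable hk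
  have hint : IntegrableOn (fun t => qqPsi k t + k * qqPhi k t) (Ioi 1) :=
    hψ.add (hφ.const_mul k)
  have hcont : ContinuousWithinAt (fun t => t * qqPsi k t) (Ici 1) 1 :=
    (continuousOn_id.mul (qqPsi_contOn hk0)) 1 self_mem_Ici
  have h := integral_Ioi_of_hasDerivAt_of_tendsto hcont
    (fun t ht => qq_hasDeriv hk ht) hint (qq_tendsto hk)
  have hH1 : (1:ℝ) * qqPsi k 1 = -1 := by
    simp [qqPsi, Real.one_rpow]
  rw [hH1] at h
  rw [integral_add hψ (hφ.const_mul k), integral_const_mul] at h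
  linarith

lemma qqPhi_integral_pos (hk : 1 < k) : 0 < ∫ t in Ioi 1, qqPhi k t := by
  have hk0 : 0 < k := lt_trans zero_lt_one hk
  have hnn : 0 ≤ᵐ[volume.restrict (Ioi (1:ℝ))] qqPhi k := by
    filter_upwards [ae_restrict_mem measurableSet_Ioi] with t ht
    exact (qqPhi_pos hk0 ht).le
  rw [setIntegral_pos_iff_support_of_nonneg_ae hnn (qqPhi_integrable hk)]
  refine lt_of_lt_of_le ?_
    (measure_mono (fun t ht => ⟨ne_of_gt (qqPhi_pos hk0 ht), ht⟩))
  show (0:ENNReal) < volume (Ioi (1:ℝ))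
  rw [Real.volume_Ioi]
  exact ENNReal.zero_lt_top

lemma qq_scale (F : ℝ → ℝ) {c : ℝ} (hc : 0 < c) :
    ∫ s in Ioi c, F (c⁻¹ * s) = c * ∫ t in Ioi 1, F t := by
  rw [integral_comp_mul_left_Ioi F c (inv_pos.mpr hc), inv_mul_cancel₀ (ne_of_gt hc), inv_inv,
    smul_eq_mul]

lemma qq_t_gt_one {s₀ s : ℝ} (hs₀ : 0 < s₀) (hs : s₀ < s) : 1 < s₀⁻¹ * s := by
  rw [inv_mul_eq_div, lt_div_iff₀ hs₀, one_mul]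
  exact hs

lemma qq_tk {s₀ s : ℝ} (hs₀ : 0 < s₀) (hs : s₀ < s) :
    (s₀⁻¹ * s) ^ k = s ^ k / (s₀ ^ k) := by
  rw [Real.mul_rpow (inv_nonneg.mpr hs₀.le) (le_of_lt (lt_trans hs₀ hs)),
    Real.inv_rpow hs₀.le, inv_mul_eq_div]

lemma qq_sqrt_eq {a s₀ s : ℝ} (hk : 0 < k) (ha : 0 < a) (hs₀ : 0 < s₀) (hs : s₀ < s) :
    Real.sqrt ((a * s ^ k) ^ 2 - (a * s₀ ^ k) ^ 2)
      = (a * s₀ ^ k) * Real.sqrt (((s₀⁻¹ * s) ^ k) ^ 2 - 1) := by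
  have hs0 : 0 < s := lt_trans hs₀ hs
  have h1 : (a * s ^ k) ^ 2 - (a * s₀ ^ k) ^ 2
      = (a * s₀ ^ k) ^ 2 * ((((s₀⁻¹ * s) ^ k)) ^ 2 - 1) := by
    rw [qq_tk hs₀ hs]
    have h2 : s₀ ^ k ≠ 0 := by positivity
    field_simp
  rw [h1, Real.sqrt_mul (sq_nonneg _), Real.sqrt_sq
    (mul_nonneg ha.le (Real.rpow_nonneg hs₀.le k))]

lemma qq_alg1 {A S T T' W : ℝ} (hA : A ≠ 0) (hS : S ≠ 0) (hT : T ≠ 0) (hW : W ≠ 0)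
    (h : T' = S / T) : 1 / (A * S) * (A * T) / (A * T * W) = 1 / (A * T) * (1 / (T' * W)) := by
  subst h
  field_simp

lemma qq_alg2 {A S T T' W : ℝ} (hA : A ≠ 0) (hS : S ≠ 0) (hT : T ≠ 0)
    (h : T' = S / T) : 1 / (A * S) * (A * T * W - A * S) = 1 / T' * (W - T') := by
  subst h
  field_simp

lemma qqL_pointwise {a s₀ s : ℝ} (hk : 0 < k) (ha : 0 < a) (hs₀ : 0 < s₀) (hs : s₀ < s) :
    (1 / (a * s ^ k)) * (a * s₀ ^ k) / Real.sqrt ((a * s ^ k) ^ 2 - (a * s₀ ^ k) ^ 2)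
      = (1 / (a * s₀ ^ k)) * qqPhi k (s₀⁻¹ * s) := by
  have hs0 : 0 < s := lt_trans hs₀ hs
  have ht1 : 1 < s₀⁻¹ * s := qq_t_gt_one hs₀ hs
  have hq : 0 < ((s₀⁻¹ * s) ^ k) ^ 2 - 1 := qq_q_pos hk ht1
  have hw : 0 < Real.sqrt (((s₀⁻¹ * s) ^ k) ^ 2 - 1) := Real.sqrt_pos.mpr hq
  rw [qq_sqrt_eq hk ha hs₀ hs]
  unfold qqPhi
  exact qq_alg1 ha.ne' (by positivity) (by positivity) hw.ne' (qq_tk hs₀ hs)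

lemma qqE_pointwise {a s₀ s : ℝ} (hk : 0 < k) (ha : 0 < a) (hs₀ : 0 < s₀) (hs : s₀ < s) :
    (1 / (a * s ^ k)) * (Real.sqrt ((a * s ^ k) ^ 2 - (a * s₀ ^ k) ^ 2) - a * s ^ k)
      = qqPsi k (s₀⁻¹ * s) := by
  have hs0 : 0 < s := lt_trans hs₀ hs
  rw [qq_sqrt_eq hk ha hs₀ hs]
  unfold qqPsi
  exact qq_alg2 ha.ne' (by positivity) (by positivity) (qq_tk hs₀ hs)

lemma qqL_integral {a s₀ : ℝ} (hk : 0 < k) (ha : 0 < a) (hs₀ : 0 < s₀) :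
    (∫ s in Ioi s₀, (1 / (a * s ^ k)) * (a * s₀ ^ k) /
        Real.sqrt ((a * s ^ k) ^ 2 - (a * s₀ ^ k) ^ 2))
      = (1 / (a * s₀ ^ k)) * (s₀ * ∫ t in Ioi 1, qqPhi k t) := by
  rw [setIntegral_congr_fun measurableSet_Ioi
    (fun s hs => qqL_pointwise hk ha hs₀ hs : EqOn _
      (fun s => (1 / (a * s₀ ^ k)) * qqPhi k (s₀⁻¹ * s)) (Ioi s₀)),
    integral_const_mul, qq_scale (qqPhi k) hs₀]

lemma qqE_integral {a s₀ : ℝ} (hk : 0 < k) (ha : 0 < a) (hs₀ : 0 < s₀) :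
    (∫ s in Ioi s₀, (1 / (a * s ^ k)) *
        (Real.sqrt ((a * s ^ k) ^ 2 - (a * s₀ ^ k) ^ 2) - a * s ^ k))
      = s₀ * ∫ t in Ioi 1, qqPsi k t := by
  rw [setIntegral_congr_fun measurableSet_Ioi
    (fun s hs => qqE_pointwise hk ha hs₀ hs : EqOn _
      (fun s => qqPsi k (s₀⁻¹ * s)) (Ioi s₀)),
    qq_scale (qqPsi k) hs₀]

/-- Quark–antiquark potential for the near-horizon `Dp`-brane background (`p < 5`),
`f(s) = a·s^{(7−p)/2}`, `g(s) = 1`: there is a constant `C_p > 0` depending only on `p`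
such that the renormalized energy satisfies
`E(s₀) = −C_p · a^{−2/(5−p)} · L(s₀)^{−2/(5−p)}` for all `a > 0`, `s₀ > 0`, i.e. the
potential is `E ∝ −(g²_{YM}N/L²)^{1/(5−p)}`. -/
theorem dp_brane_quark_antiquark_potential (p : ℕ) (hp : p < 5) (k : ℝ)
    (hk : k = ((7 : ℝ) - p) / 2)
    (L E : ℝ → ℝ → ℝ)
    (hL : ∀ a s₀, L a s₀ = 2 * ∫ s in Ioi s₀,
      ((1 : ℝ) / (a * s ^ k)) * (a * s₀ ^ k) /
        Real.sqrt ((a * s ^ k) ^ 2 - (a * s₀ ^ k) ^ 2))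
    (hE : ∀ a s₀, E a s₀ = (a * s₀ ^ k) * L a s₀
      + 2 * (∫ s in Ioi s₀, ((1 : ℝ) / (a * s ^ k)) *
          (Real.sqrt ((a * s ^ k) ^ 2 - (a * s₀ ^ k) ^ 2) - a * s ^ k))
      - 2 * ∫ _s in Ioo (0 : ℝ) s₀, (1 : ℝ)) :
    ∃ C : ℝ, 0 < C ∧ ∀ a : ℝ, 0 < a → ∀ s₀ : ℝ, 0 < s₀ →
      E a s₀ = -C * a ^ (-(2 : ℝ) / ((5 : ℝ) - p)) *
        L a s₀ ^ (-(2 : ℝ) / ((5 : ℝ) - p)) := by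
  have hp4 : (p : ℝ) ≤ 4 := by exact_mod_cast Nat.lt_succ_iff.mp hp
  have hk1 : 1 < k := by rw [hk]; linarith
  have hk0 : 0 < k := lt_trans zero_lt_one hk1
  have hkm : (0:ℝ) < k - 1 := by linarith
  have hep : (5:ℝ) - p = 2 * (k - 1) := by rw [hk]; ring
  have hJpos : 0 < ∫ t in Ioi 1, qqPhi k t := qqPhi_integral_pos hk1
  set J := ∫ t in Ioi 1, qqPhi k t with hJ
  have h2J : (0:ℝ) < 2 * J := by linarith
  refine ⟨2 * (k - 1) * J * (2 * J) ^ ((2:ℝ) / ((5:ℝ) - p)), ?_, fun a ha s₀ hs₀ => ?_⟩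
  · exact mul_pos (mul_pos (by linarith) hJpos) (Real.rpow_pos_of_pos h2J _)
  · have hs₀k : (0:ℝ) < s₀ ^ k := Real.rpow_pos_of_pos hs₀ k
    have hLval0 : L a s₀ = 2 * ((1 / (a * s₀ ^ k)) * (s₀ * J)) := by
      rw [hL, qqL_integral hk0 ha hs₀]
    have hLval : L a s₀ = 2 * J * s₀ ^ ((1:ℝ) - k) * a⁻¹ := by
      rw [hLval0, Real.rpow_sub hs₀, Real.rpow_one]
      field_simp
    have hEval : E a s₀ = 2 * (1 - k) * s₀ * J := by
      rw [hE, hLval0, qqE_integral hk0 ha hs₀, qqPsi_integral hk1, ← hJ,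
        setIntegral_const, Real.volume_real_Ioo_of_le (by linarith), smul_eq_mul, mul_one]
      field_simp
      ring
    have hXpos : 0 < (2 * J) ^ ((2:ℝ) / ((5:ℝ) - p)) := Real.rpow_pos_of_pos h2J _
    have hneg : (2 * J) ^ (-(2:ℝ) / ((5:ℝ) - p)) = ((2 * J) ^ ((2:ℝ) / ((5:ℝ) - p)))⁻¹ := by
      rw [neg_div, Real.rpow_neg h2J.le]
    have h1 : ((1:ℝ) - k) * (-(2:ℝ) / ((5:ℝ) - p)) = 1 := by
      rw [hep]
      field_simp
      ring
    have hae : (0:ℝ) < a ^ (-(2:ℝ) / ((5:ℝ) - p)) := Real.rpow_pos_of_pos ha _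
    have hLe : L a s₀ ^ (-(2:ℝ) / ((5:ℝ) - p))
        = ((2 * J) ^ ((2:ℝ) / ((5:ℝ) - p)))⁻¹ * s₀ * (a ^ (-(2:ℝ) / ((5:ℝ) - p)))⁻¹ := by
      rw [hLval,
        Real.mul_rpow (mul_nonneg h2J.le (Real.rpow_nonneg hs₀.le _)) (inv_nonneg.mpr ha.le),
        Real.mul_rpow h2J.le (Real.rpow_nonneg hs₀.le _),
        ← Real.rpow_mul hs₀.le, h1, Real.rpow_one, Real.inv_rpow ha.le, hneg]
    rw [hEval, hLe]
    field_simp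
    ring
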